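/- If L is a trim lattice with left modular maximal chain of length n, then for each i with 1 ≤ i ≤ n there is exactly one join-irreducible v with δ(v) = i and exactly one meet-irreducible w with ε(w) = i, where δ(v) = min{j : v ≤ x_j} and ε(w) = max{j : x_j ≤ w} + 1. -/

import Mathlib

variable {α : Type*}

/-- An element is join-irreducible if it is not the minimum and is not a join
of two strictly smaller elements. -/
def JoinIrred [Lattice α] (a : α) : Prop :=
  ¬ IsBot a ∧ ∀ b c : α, b < a → c < a → b ⊔ c ≠ a

/-- An element is meet-irreducible if it is not the maximum and is not a meet
of two strictly larger elements. -/
def MeetIrred [Lattice α] (a : α) : Prop :=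
  ¬ IsTop a ∧ ∀ b c : α, a < b → a < c → b ⊓ c ≠ a

/-- An element `x` is left modular if `(y ⊔ x) ⊓ z = y ⊔ (x ⊓ z)` for all `y < z`. -/
def LeftModular [Lattice α] (x : α) : Prop :=
  ∀ y z : α, y < z → (y ⊔ x) ⊓ z = y ⊔ (x ⊓ z)

/-- A maximal chain `⊥ = x 0 ⋖ x 1 ⋖ ⋯ ⋖ x n = ⊤` all of whose elements are left modular. -/
def IsLMChain [Lattice α] {n : ℕ} (x : Fin (n + 1) → α) : Prop :=
  IsBot (x 0) ∧ IsTop (x (Fin.last n)) ∧ (∀ i : Fin n, x i.castSucc ⋖ x i.succ) ∧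
    ∀ i, LeftModular (x i)

/-- A finite lattice is trim if it has a left modular maximal chain of `n + 1` elements,
exactly `n` join-irreducibles and exactly `n` meet-irreducibles. -/
def Trim (α : Type*) [Lattice α] [Finite α] : Prop :=
  ∃ (n : ℕ) (x : Fin (n + 1) → α), IsLMChain x ∧
    Nat.card {v : α // JoinIrred v} = n ∧ Nat.card {v : α // MeetIrred v} = n

/-- In a trim lattice with left modular maximal chain `x` of length `n`, for each
`1 ≤ i ≤ n` there is exactly one join-irreducible `v` with `δ v = i` and exactly one
meet-irreducible `w` with `ε w = i`, where `δ v = min {j | v ≤ x j}` and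
`ε w = max {j | x j ≤ w} + 1`. -/
theorem unique_irreducible_per_label [Lattice α] [Finite α] {n : ℕ}
    (x : Fin (n + 1) → α) (hx : IsLMChain x)
    (hJ : Nat.card {v : α // JoinIrred v} = n)
    (hM : Nat.card {v : α // MeetIrred v} = n)
    (i : Fin (n + 1)) (hi : 1 ≤ (i : ℕ)) :
    (∃! v : α, JoinIrred v ∧ IsLeast {k : Fin (n + 1) | v ≤ x k} i) ∧
    (∃! w : α, MeetIrred w ∧ ∃ j : Fin (n + 1),
      IsGreatest {k : Fin (n + 1) | x k ≤ w} j ∧ (j : ℕ) + 1 = (i : ℕ)) := by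
  classical
  obtain ⟨hbot, htop, hcov, -⟩ := hx
  have smono : StrictMono x := Fin.strictMono_iff_lt_succ.2 fun k => (hcov k).lt
  have mono := smono.monotone
  have := Fintype.ofFinite α
  have hine : i ≠ 0 := by
    intro h; rw [h] at hi; simp at hi
  constructor
  · -- join part
    have hJne : ∀ v : α, (Finset.univ.filter (fun k => v ≤ x k)).Nonempty := fun v =>
      ⟨Fin.last n, by simp [htop v]⟩
    set jm : α → Fin (n + 1) :=
      fun v => (Finset.univ.filter (fun k => v ≤ x k)).min' (hJne v) with hjmdef
    have hjmLeast : ∀ v : α, IsLeast {k | v ≤ x k} (jm v) := fun v =>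
      ⟨by have := Finset.min'_mem _ (hJne v); simpa [hjmdef] using this,
       fun k hk => Finset.min'_le _ _ (by simpa using hk)⟩
    have hjm0 : ∀ v : α, JoinIrred v → jm v ≠ 0 := by
      intro v hv h0
      have h1 : v ≤ x (jm v) := (hjmLeast v).1
      rw [h0] at h1
      exact hv.1 fun b => h1.trans (hbot b)
    have hsurjJ : ∀ k : Fin n, ∃ v, JoinIrred v ∧ jm v = k.succ := by
      intro k
      obtain ⟨v, hvmem, hvmin⟩ : ∃ v ∈ (Finset.univ.filter (fun a : α => a ≤ x k.succ ∧ ¬ a ≤ x k.castSucc)),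
          ∀ b ∈ (Finset.univ.filter (fun a : α => a ≤ x k.succ ∧ ¬ a ≤ x k.castSucc)), ¬ b < v := by
        obtain ⟨m, hm⟩ := Finset.exists_minimal
          (⟨x k.succ, by simp [(hcov k).lt.not_ge]⟩ :
            (Finset.univ.filter (fun a : α => a ≤ x k.succ ∧ ¬ a ≤ x k.castSucc)).Nonempty)
        exact ⟨m, hm.1, fun b hb hlt => hlt.not_ge (hm.2 hb hlt.le)⟩
      simp only [Finset.mem_filter, Finset.mem_univ, true_and] at hvmem
      have hvJ : JoinIrred v := by
        constructor
        · intro hb; exact hvmem.2 (hb _)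
        · intro b c hb hc habs
          have hb' : b ≤ x k.castSucc := by
            by_contra hbn
            exact hvmin b (by simp [hb.le.trans hvmem.1, hbn]) hb
          have hc' : c ≤ x k.castSucc := by
            by_contra hcn
            exact hvmin c (by simp [hc.le.trans hvmem.1, hcn]) hc
          exact hvmem.2 (habs ▸ sup_le hb' hc')
      refine ⟨v, hvJ, le_antisymm (Finset.min'_le _ _ (by simp [hvmem.1])) ?_⟩
      by_contra hlt
      push_neg at hlt
      have : jm v ≤ k.castSucc := Fin.le_castSucc_iff.2 hlt
      exact hvmem.2 (((hjmLeast v).1).trans (mono this))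
    set D : {v : α // JoinIrred v} → Fin n :=
      fun v => (jm v.1).pred (hjm0 v.1 v.2) with hDdef
    have hDsurj : Function.Surjective D := by
      intro k
      obtain ⟨v, hv, hjmv⟩ := hsurjJ k
      exact ⟨⟨v, hv⟩, by simp [hDdef, hjmv]⟩
    have hcard : Fintype.card {v : α // JoinIrred v} = Fintype.card (Fin n) := by
      rw [← Nat.card_eq_fintype_card, hJ, Fintype.card_fin]
    have hDinj : Function.Injective D :=
      ((Fintype.bijective_iff_surjective_and_card D).2 ⟨hDsurj, hcard⟩).injective
    obtain ⟨v, hv, hjmv⟩ := hsurjJ (i.pred hine)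
    rw [Fin.succ_pred] at hjmv
    refine ⟨v, ⟨hv, hjmv ▸ hjmLeast v⟩, ?_⟩
    rintro v' ⟨hv', hle'⟩
    have hjmv' : jm v' = i := (hjmLeast v').unique hle'
    have : D ⟨v', hv'⟩ = D ⟨v, hv⟩ := by
      apply Fin.ext; simp [hDdef, Fin.coe_pred, hjmv, hjmv']
    simpa using hDinj this
  · -- meet part
    have hMne : ∀ w : α, (Finset.univ.filter (fun k => x k ≤ w)).Nonempty := fun w =>
      ⟨0, by simp [hbot w]⟩
    set jM : α → Fin (n + 1) :=
      fun w => (Finset.univ.filter (fun k => x k ≤ w)).max' (hMne w) with hjMdef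
    have hjMGreatest : ∀ w : α, IsGreatest {k | x k ≤ w} (jM w) := fun w =>
      ⟨by have := Finset.max'_mem _ (hMne w); simpa [hjMdef] using this,
       fun k hk => Finset.le_max' _ _ (by simpa using hk)⟩
    have hjMlast : ∀ w : α, MeetIrred w → jM w ≠ Fin.last n := by
      intro w hw hl
      have h1 : x (jM w) ≤ w := (hjMGreatest w).1
      rw [hl] at h1
      exact hw.1 fun b => (htop b).trans h1
    have hsurjM : ∀ k : Fin n, ∃ w, MeetIrred w ∧ jM w = k.castSucc := by
      intro k
      obtain ⟨w, hwmem, hwmax⟩ : ∃ w ∈ (Finset.univ.filter (fun a : α => x k.castSucc ≤ a ∧ ¬ x k.succ ≤ a)),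
          ∀ b ∈ (Finset.univ.filter (fun a : α => x k.castSucc ≤ a ∧ ¬ x k.succ ≤ a)), ¬ w < b := by
        obtain ⟨m, hm⟩ := Finset.exists_maximal
          (⟨x k.castSucc, by simp [(hcov k).lt.not_ge]⟩ :
            (Finset.univ.filter (fun a : α => x k.castSucc ≤ a ∧ ¬ x k.succ ≤ a)).Nonempty)
        exact ⟨m, hm.1, fun b hb hlt => hlt.not_ge (hm.2 hb hlt.le)⟩
      simp only [Finset.mem_filter, Finset.mem_univ, true_and] at hwmem
      have hwM : MeetIrred w := by
        constructor
        · intro hb; exact hwmem.2 (hb _)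
        · intro b c hb hc habs
          have hb' : x k.succ ≤ b := by
            by_contra hbn
            exact hwmax b (by simp [hwmem.1.trans hb.le, hbn]) hb
          have hc' : x k.succ ≤ c := by
            by_contra hcn
            exact hwmax c (by simp [hwmem.1.trans hc.le, hcn]) hc
          exact hwmem.2 (habs ▸ le_inf hb' hc')
      refine ⟨w, hwM, le_antisymm ?_ (Finset.le_max' _ _ (by simp [hwmem.1]))⟩
      by_contra hlt
      push_neg at hlt
      have : k.succ ≤ jM w := Fin.castSucc_lt_iff_succ_le.1 hlt
      exact hwmem.2 ((mono this).trans ((hjMGreatest w).1))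
    set E : {w : α // MeetIrred w} → Fin n :=
      fun w => (jM w.1).castPred (hjMlast w.1 w.2) with hEdef
    have hEsurj : Function.Surjective E := by
      intro k
      obtain ⟨w, hw, hjMw⟩ := hsurjM k
      exact ⟨⟨w, hw⟩, by simp [hEdef, hjMw]⟩
    have hcard : Fintype.card {w : α // MeetIrred w} = Fintype.card (Fin n) := by
      rw [← Nat.card_eq_fintype_card, hM, Fintype.card_fin]
    have hEinj : Function.Injective E :=
      ((Fintype.bijective_iff_surjective_and_card E).2 ⟨hEsurj, hcard⟩).injective
    obtain ⟨w, hw, hjMw⟩ := hsurjM (i.pred hine)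
    have hco : (((i.pred hine).castSucc : Fin (n + 1)) : ℕ) + 1 = (i : ℕ) := by
      simp [Fin.coe_castSucc, Fin.coe_pred]
      omega
    refine ⟨w, ⟨hw, (i.pred hine).castSucc, hjMw ▸ hjMGreatest w, hco⟩, ?_⟩
    rintro w' ⟨hw', j', hg', hj'⟩
    have hjMw' : jM w' = j' := (hjMGreatest w').unique hg'
    have h1 : ((jM w' : Fin (n + 1)) : ℕ) = (j' : ℕ) := by rw [hjMw']
    have h2 : ((jM w : Fin (n + 1)) : ℕ) = (i : ℕ) - 1 := by
      rw [hjMw]; simp [Fin.coe_castSucc, Fin.coe_pred]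
    have : E ⟨w', hw'⟩ = E ⟨w, hw⟩ := by
      apply Fin.ext
      simp only [hEdef, Fin.coe_castPred]
      omega
    simpa using hEinj this
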